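/- Let (X,d) be a metric space satisfying the ⊠-inequalities and let x,y,z,w ∈ X be four distinct points such that {x,y,z,w} is over-distance with respect to {y,w}. Then the comparison angles satisfy ∠̃yxz + ∠̃zxw > π or ∠̃yzx + ∠̃xzw > π. -/

import Mathlib

noncomputable section

/-- A metric space satisfies the ⊠-inequalities. -/
def BoxIneq (X : Type*) [MetricSpace X] : Prop :=
  ∀ t ∈ Set.Icc (0:ℝ) 1, ∀ s ∈ Set.Icc (0:ℝ) 1, ∀ x y z w : X,
    0 ≤ (1 - t) * (1 - s) * dist x y ^ 2 + t * (1 - s) * dist y z ^ 2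
      + t * s * dist z w ^ 2 + (1 - t) * s * dist w x ^ 2
      - t * (1 - t) * dist x z ^ 2 - s * (1 - s) * dist y w ^ 2

/-- `{x,y,z,w}` is over-distance with respect to `{y,w}`. -/
def OverDistance {X : Type*} [MetricSpace X] (x y z w : X) : Prop :=
  ∀ x' y' z' w' : EuclideanSpace ℝ (Fin 3),
    dist x' y' = dist x y → dist y' z' = dist y z → dist z' x' = dist z x →
    dist x' w' = dist x w → dist w' z' = dist w z →
    dist y' w' < dist y w

/-- The comparison angle `∠̃abc` at `b`, computed by the law of cosines. -/
def compAngle {X : Type*} [MetricSpace X] (a b c : X) : ℝ :=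
  Real.arccos ((dist b a ^ 2 + dist b c ^ 2 - dist a c ^ 2) / (2 * dist b a * dist b c))

/-- Auxiliary: distance between two planar points in `ℝ³`. -/
lemma aux_dist_pts (u1 u2 v1 v2 r : ℝ) (hr : 0 ≤ r) (h : (u1 - v1)^2 + (u2 - v2)^2 = r^2) :
    dist ((WithLp.equiv 2 (Fin 3 → ℝ)).symm ![u1,u2,0] : EuclideanSpace ℝ (Fin 3))
      ((WithLp.equiv 2 (Fin 3 → ℝ)).symm ![v1,v2,0]) = r := by
  rw [EuclideanSpace.dist_eq]
  simp only [WithLp.equiv_symm_apply, WithLp.ofLp_toLp, Fin.sum_univ_three, Matrix.cons_val_zero,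
    Matrix.cons_val_one, Matrix.head_cons, Matrix.cons_val_two, Matrix.tail_cons,
    Real.dist_eq, sq_abs]
  rw [show (u1 - v1)^2 + (u2 - v2)^2 + (0 - 0)^2 = r^2 by rw [← h]; ring]
  exact Real.sqrt_sq hr

/-- Auxiliary: from the nonnegativity of a "cosine sum", the cross-product type
quantity is nonnegative. -/
lemma aux_cross_nonneg (a e u v p q : ℝ) (ha : 0 < a) (he : 0 < e)
    (hv : 0 ≤ v) (hq : 0 ≤ q) (hu : u^2 + v^2 = a^2) (hp : p^2 + q^2 = e^2)
    (hA : 0 ≤ e*u + a*p) : 0 ≤ p*v + u*q := by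
  rcases le_or_gt 0 u with hu0 | hu0
  · rcases le_or_gt 0 p with hp0 | hp0
    · positivity
    · have h3 : 0 ≤ a*(-p) := mul_nonneg ha.le (by linarith)
      have h4 : a*(-p) ≤ e*u := by linarith
      have h2 : (a*(-p))^2 ≤ (e*u)^2 := by nlinarith
      have h5 : ((-p)*v)^2 ≤ (u*q)^2 := by nlinarith
      nlinarith [h5, mul_nonneg hu0 hq, mul_nonneg (neg_nonneg.mpr hp0.le) hv]
  · have hnu : 0 ≤ -u := by linarith
    have h3 : 0 ≤ e*(-u) := mul_nonneg he.le (by linarith)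
    have h4 : e*(-u) ≤ a*p := by linarith
    have hp0 : 0 ≤ p := by nlinarith
    have h2 : (e*(-u))^2 ≤ (a*p)^2 := by nlinarith
    have h5 : ((-u)*q)^2 ≤ (p*v)^2 := by nlinarith
    nlinarith [h5, mul_nonneg hp0 hv, mul_nonneg hnu hq]

/-- Auxiliary: from `arccos u + arccos v ≤ π` we get `0 ≤ u + v`. -/
lemma aux_arccos_add (u v : ℝ) (hu1 : -1 ≤ u) (hu2 : u ≤ 1) (hv1 : -1 ≤ v) (hv2 : v ≤ 1)
    (h : Real.arccos u + Real.arccos v ≤ Real.pi) : 0 ≤ u + v := by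
  have h3 : Real.arccos u ≤ Real.arccos (-v) := by
    rw [Real.arccos_neg]; linarith
  have h4 := Real.cos_le_cos_of_nonneg_of_le_pi (Real.arccos_nonneg u)
    (Real.arccos_le_pi (-v)) h3
  rw [Real.cos_arccos hu1 hu2, Real.cos_arccos (by linarith) (by linarith)] at h4
  linarith

/-- Auxiliary: picking parameters when an endpoint lies in the open interval on the axis. -/
lemma aux_interior_pick (p q1 q2 c D : ℝ) (hc : 0 < c) (hp0 : 0 < p) (hpc : p < c)
    (hD : 0 < D) :
    ∃ s t : ℝ, s ∈ Set.Ioo (0:ℝ) 1 ∧ t ∈ Set.Icc (0:ℝ) 1 ∧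
      ((1-s)*p + s*q1 - t*c)^2 + ((1-s)*0 + s*q2)^2 < s*(1-s)*D := by
  have hm0 : 0 < min p (c - p) := lt_min hp0 (by linarith)
  have hK0 : (0:ℝ) < |q1 - p| + 1 := by positivity
  set m := min p (c-p) with hm
  set K := |q1 - p| + 1 with hK
  set s := min (1/2) (min (D/(2*(q2^2+D))) (m/K)) with hs
  have hsD0 : 0 < D/(2*(q2^2+D)) := by positivity
  have hs0 : 0 < s := lt_min (by norm_num) (lt_min hsD0 (by positivity))
  have hs2 : s ≤ 1/2 := min_le_left _ _
  have hs1 : s < 1 := by linarith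
  have hsD : s ≤ D/(2*(q2^2+D)) := (min_le_right _ _).trans (min_le_left _ _)
  have hsm : s ≤ m/K := (min_le_right _ _).trans (min_le_right _ _)
  have hbound : s * |q1 - p| ≤ m := by
    have h1 : s * |q1 - p| ≤ (m/K) * |q1 - p| := mul_le_mul_of_nonneg_right hsm (abs_nonneg _)
    have h2 : (m/K) * |q1 - p| ≤ (m/K) * K := by
      apply mul_le_mul_of_nonneg_left _ (by positivity)
      rw [hK]; linarith [abs_nonneg (q1 - p)]
    have h3 : (m/K)*K = m := div_mul_cancel₀ m (ne_of_gt hK0)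
    linarith
  have habs : |s*(q1-p)| ≤ m := by rw [abs_mul, abs_of_pos hs0]; exact hbound
  have habs' := abs_le.mp habs
  set ζ := (1-s)*p + s*q1 with hζ
  have h4 : -m ≤ ζ - p := by rw [hζ, show (1-s)*p + s*q1 - p = s*(q1-p) by ring]; exact habs'.1
  have h5 : ζ - p ≤ m := by rw [hζ, show (1-s)*p + s*q1 - p = s*(q1-p) by ring]; exact habs'.2
  have hmp : m ≤ p := min_le_left _ _
  have hmcp : m ≤ c - p := min_le_right _ _
  have hζ0 : 0 ≤ ζ := by linarith
  have hζc : ζ ≤ c := by linarith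
  refine ⟨s, ζ/c, ⟨hs0, hs1⟩, ⟨by positivity, (div_le_one hc).mpr hζc⟩, ?_⟩
  have hT1 : (1-s)*p + s*q1 - ζ/c*c = 0 := by
    rw [div_mul_cancel₀ _ (ne_of_gt hc), hζ]; ring
  rw [hT1]
  have h6 : s * (2*(q2^2+D)) ≤ D := (le_div_iff₀ (by positivity)).mp hsD
  have key : s*q2^2 < (1-s)*D := by nlinarith
  nlinarith [mul_lt_mul_of_pos_left key hs0]

/-- Auxiliary: finding `(s, t)` making the quadratic form negative. -/
lemma aux_pick_st (y1 y2 w1 w2 c D : ℝ) (hc : 0 < c) (hD : 0 < D)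
    (hy2 : 0 ≤ y2) (hw2 : w2 ≤ 0)
    (hY : y1^2 + y2^2 ≠ 0) (hYZ : (y1-c)^2 + y2^2 ≠ 0)
    (hW : w1^2 + w2^2 ≠ 0) (hWZ : (w1-c)^2 + w2^2 ≠ 0)
    (hA' : 0 ≤ w1*y2 - y1*w2) (hB' : 0 ≤ (c-w1)*y2 - (c-y1)*w2)
    (hmax : 0 ≤ y1 ∨ 0 ≤ w1) (hmin : y1 ≤ c ∨ w1 ≤ c) :
    ∃ s t : ℝ, s ∈ Set.Ioo (0:ℝ) 1 ∧ t ∈ Set.Icc (0:ℝ) 1 ∧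
      ((1-s)*y1 + s*w1 - t*c)^2 + ((1-s)*y2 + s*w2)^2 < s*(1-s)*D := by
  rcases hy2.lt_or_eq with hy2' | hy2'
  · rcases hw2.lt_or_eq with hw2' | hw2'
    · -- y2 > 0, w2 < 0 : genuine crossing
      have hden : 0 < y2 - w2 := by linarith
      set s := y2/(y2 - w2) with hs
      have hs0 : 0 < s := by positivity
      have hs1 : s < 1 := by rw [hs, div_lt_one hden]; linarith
      set ξ := (1-s)*y1 + s*w1 with hξ
      have hξval : ξ = (w1*y2 - y1*w2)/(y2 - w2) := by
        rw [hξ, hs]; field_simp; ring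
      have hξ0 : 0 ≤ ξ := hξval ▸ div_nonneg hA' hden.le
      have hξc : ξ ≤ c := by
        have hcξ : c - ξ = ((c-w1)*y2 - (c-y1)*w2)/(y2 - w2) := by
          rw [hξval]; field_simp; ring
        have := div_nonneg hB' hden.le
        linarith [hcξ ▸ this]
      have hvert : (1-s)*y2 + s*w2 = 0 := by
        rw [hs]; field_simp; ring
      refine ⟨s, ξ/c, ⟨hs0, hs1⟩, ⟨by positivity, (div_le_one hc).mpr hξc⟩, ?_⟩
      have hT1 : (1-s)*y1 + s*w1 - ξ/c*c = 0 := by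
        rw [div_mul_cancel₀ _ (ne_of_gt hc), hξ]; ring
      rw [hT1, hvert]
      have : 0 < s*(1-s)*D := mul_pos (mul_pos hs0 (by linarith)) hD
      nlinarith
    · -- y2 > 0, w2 = 0 : w endpoint interior
      have hw2'' : w2 = 0 := hw2'
      have hw10 : w1 ≠ 0 := by
        intro h; apply hW; rw [h, hw2'']; ring
      have hw1nn : 0 ≤ w1 := by
        have h1 : 0 ≤ w1*y2 := by rw [hw2''] at hA'; linarith [hA']
        by_contra hcon
        push_neg at hcon
        nlinarith [mul_pos (by linarith : 0 < -w1) hy2']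
      have hw1pos : 0 < w1 := hw1nn.lt_of_ne (Ne.symm hw10)
      have hw1c' : w1 ≠ c := by
        intro h; apply hWZ; rw [h, hw2'']; ring
      have hw1c : w1 < c := by
        have h1 : 0 ≤ (c-w1)*y2 := by rw [hw2''] at hB'; linarith [hB']
        have h2 : 0 ≤ c - w1 := by
          by_contra hcon
          push_neg at hcon
          nlinarith [mul_pos (by linarith : 0 < w1 - c) hy2']
        rcases h2.lt_or_eq with h | h
        · linarith
        · exact absurd (by linarith : w1 = c) hw1c'
      obtain ⟨σ, t, hσ, ht, hlt⟩ := aux_interior_pick w1 y1 y2 c D hc hw1pos hw1c hD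
      refine ⟨1-σ, t, ⟨by linarith [hσ.2], by linarith [hσ.1]⟩, ht, ?_⟩
      rw [hw2'']
      nlinarith [hlt]
  · -- y2 = 0
    have hy2'' : y2 = 0 := hy2'.symm
    have hy10 : y1 ≠ 0 := by intro h; apply hY; rw [h, hy2'']; ring
    have hy1c' : y1 ≠ c := by intro h; apply hYZ; rw [h, hy2'']; ring
    rcases hw2.lt_or_eq with hw2' | hw2'
    · -- y2 = 0, w2 < 0 : y endpoint interior
      have hnw2 : 0 < -w2 := by linarith
      have hy1nn : 0 ≤ y1 := by
        have h1 : 0 ≤ y1*(-w2) := by rw [hy2''] at hA'; nlinarith [hA']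
        by_contra hcon
        push_neg at hcon
        nlinarith [mul_pos (by linarith : 0 < -y1) hnw2]
      have hy1pos : 0 < y1 := hy1nn.lt_of_ne (Ne.symm hy10)
      have hy1c : y1 < c := by
        have h1 : 0 ≤ (c-y1)*(-w2) := by rw [hy2''] at hB'; nlinarith [hB']
        have h2 : 0 ≤ c - y1 := by
          by_contra hcon
          push_neg at hcon
          nlinarith [mul_pos (by linarith : 0 < y1 - c) hnw2]
        rcases h2.lt_or_eq with h | h
        · linarith
        · exact absurd (by linarith : y1 = c) hy1c'
      obtain ⟨s, t, hσ, ht, hlt⟩ := aux_interior_pick y1 w1 w2 c D hc hy1pos hy1c hD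
      refine ⟨s, t, hσ, ht, ?_⟩
      rw [hy2'']
      nlinarith [hlt]
    · -- y2 = 0, w2 = 0 : everything on the axis
      have hw2'' : w2 = 0 := hw2'
      have hw10 : w1 ≠ 0 := by intro h; apply hW; rw [h, hw2'']; ring
      have hw1c' : w1 ≠ c := by intro h; apply hWZ; rw [h, hw2'']; ring
      by_cases hy1i : 0 < y1 ∧ y1 < c
      · obtain ⟨s, t, hσ, ht, hlt⟩ := aux_interior_pick y1 w1 w2 c D hc hy1i.1 hy1i.2 hD
        refine ⟨s, t, hσ, ht, ?_⟩
        rw [hy2'']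
        nlinarith [hlt]
      · by_cases hw1i : 0 < w1 ∧ w1 < c
        · obtain ⟨σ, t, hσ, ht, hlt⟩ := aux_interior_pick w1 y1 y2 c D hc hw1i.1 hw1i.2 hD
          refine ⟨1-σ, t, ⟨by linarith [hσ.2], by linarith [hσ.1]⟩, ht, ?_⟩
          rw [hw2'', hy2'']
          nlinarith [hlt]
        · -- both endpoints outside [0,c]
          have hy1out : y1 < 0 ∨ c < y1 := by
            rcases lt_trichotomy y1 0 with h | h | h
            · exact Or.inl h
            · exact absurd h hy10
            · rcases lt_trichotomy y1 c with h2 | h2 | h2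
              · exact absurd ⟨h, h2⟩ hy1i
              · exact absurd h2 hy1c'
              · exact Or.inr h2
          have hw1out : w1 < 0 ∨ c < w1 := by
            rcases lt_trichotomy w1 0 with h | h | h
            · exact Or.inl h
            · exact absurd h hw10
            · rcases lt_trichotomy w1 c with h2 | h2 | h2
              · exact absurd ⟨h, h2⟩ hw1i
              · exact absurd h2 hw1c'
              · exact Or.inr h2
          have hkey : (y1 < 0 ∧ c < w1) ∨ (c < y1 ∧ w1 < 0) := by
            rcases hy1out with h | h
            · rcases hw1out with h2 | h2
              · rcases hmax with h3 | h3 <;> linarith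
              · exact Or.inl ⟨h, h2⟩
            · rcases hw1out with h2 | h2
              · exact Or.inr ⟨h, h2⟩
              · rcases hmin with h3 | h3 <;> linarith
          have hne : w1 - y1 ≠ 0 := by
            rcases hkey with ⟨h1, h2⟩ | ⟨h1, h2⟩ <;> intro h <;> nlinarith
          set s := (c/2 - y1)/(w1 - y1) with hs
          have hs01 : 0 < s ∧ s < 1 := by
            rcases hkey with ⟨h1, h2⟩ | ⟨h1, h2⟩
            · constructor
              · apply div_pos (by linarith) (by linarith)
              · rw [hs, div_lt_one (by linarith)]; linarith
            · have hrw : s = (y1 - c/2)/(y1 - w1) := by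
                rw [hs, show c/2 - y1 = -(y1 - c/2) by ring,
                  show w1 - y1 = -(y1 - w1) by ring, neg_div_neg_eq]
              constructor
              · rw [hrw]; apply div_pos (by linarith) (by linarith)
              · rw [hrw, div_lt_one (by linarith)]; linarith
          have hT1 : (1-s)*y1 + s*w1 - (1/2)*c = 0 := by
            have : s*(w1 - y1) = c/2 - y1 := by
              rw [hs, div_mul_cancel₀ _ hne]
            nlinarith [this]
          refine ⟨s, 1/2, ⟨hs01.1, hs01.2⟩, ⟨by norm_num, by norm_num⟩, ?_⟩
          rw [hy2'', hw2'', hT1]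
          have : 0 < s*(1-s)*D := mul_pos (mul_pos hs01.1 (by linarith [hs01.2])) hD
          nlinarith

/-- Auxiliary: bounds for the cosine quotient from the triangle inequalities. -/
lemma aux_cos_bound (a b c : ℝ) (ha : 0 < a) (hc : 0 < c)
    (t1 : b ≤ a + c) (t2 : a ≤ b + c) (t3 : c ≤ a + b) :
    -1 ≤ (a^2 + c^2 - b^2)/(2*a*c) ∧ (a^2 + c^2 - b^2)/(2*a*c) ≤ 1 := by
  constructor
  · rw [le_div_iff₀ (by positivity)]
    nlinarith [mul_nonneg (by linarith : (0:ℝ) ≤ a + c - b) (by linarith : (0:ℝ) ≤ a + c + b)]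
  · rw [div_le_one (by positivity)]
    nlinarith [mul_nonneg (by linarith : (0:ℝ) ≤ b + c - a) (by linarith : (0:ℝ) ≤ a + b - c)]

/-- Auxiliary: sign dichotomy. -/
lemma aux_or_nonneg (a e u p : ℝ) (ha : 0 < a) (he : 0 < e) (hA : 0 ≤ e*u + a*p) :
    0 ≤ u ∨ 0 ≤ p := by
  rcases le_or_gt 0 u with h | h
  · exact Or.inl h
  · right
    nlinarith [mul_pos he (by linarith : 0 < -u)]

set_option maxHeartbeats 2000000 in
/-- Lemma 6.7: for an over-distance quadruple, one of the two sums of comparison angles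
exceeds `π`. -/
theorem overDistance_angle_sum {X : Type*} [MetricSpace X] (hX : BoxIneq X)
    (x y z w : X)
    (hxy : x ≠ y) (hxz : x ≠ z) (hxw : x ≠ w)
    (hyz : y ≠ z) (hyw : y ≠ w) (hzw : z ≠ w)
    (hod : OverDistance x y z w) :
    Real.pi < compAngle y x z + compAngle z x w ∨
    Real.pi < compAngle y z x + compAngle x z w := by
  by_contra hcon
  push_neg at hcon
  obtain ⟨hsum1, hsum2⟩ := hcon
  obtain ⟨a, hadef⟩ : ∃ v : ℝ, v = dist x y := ⟨_, rfl⟩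
  obtain ⟨b, hbdef⟩ : ∃ v : ℝ, v = dist y z := ⟨_, rfl⟩
  obtain ⟨c, hcdef⟩ : ∃ v : ℝ, v = dist x z := ⟨_, rfl⟩
  obtain ⟨e, hedef⟩ : ∃ v : ℝ, v = dist x w := ⟨_, rfl⟩
  obtain ⟨g, hgdef⟩ : ∃ v : ℝ, v = dist z w := ⟨_, rfl⟩
  obtain ⟨f, hfdef⟩ : ∃ v : ℝ, v = dist y w := ⟨_, rfl⟩
  have ha : 0 < a := by rw [hadef]; exact dist_pos.mpr hxy
  have hb : 0 < b := by rw [hbdef]; exact dist_pos.mpr hyz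
  have hc : 0 < c := by rw [hcdef]; exact dist_pos.mpr hxz
  have he : 0 < e := by rw [hedef]; exact dist_pos.mpr hxw
  have hg : 0 < g := by rw [hgdef]; exact dist_pos.mpr hzw
  have hf : 0 < f := by rw [hfdef]; exact dist_pos.mpr hyw
  -- triangle inequalities
  have tri1 : b ≤ a + c := by
    rw [hadef, hbdef, hcdef, dist_comm x y]; exact dist_triangle y x z
  have tri2 : a ≤ b + c := by
    rw [hadef, hbdef, hcdef, dist_comm y z]
    calc dist x y ≤ dist x z + dist z y := dist_triangle x z y
      _ = dist z y + dist x z := by ring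
  have tri3 : c ≤ a + b := by
    rw [hadef, hbdef, hcdef]; exact dist_triangle x y z
  have tri4 : g ≤ e + c := by
    rw [hedef, hgdef, hcdef, dist_comm x w, dist_comm x z]
    calc dist z w ≤ dist z x + dist x w := dist_triangle z x w
      _ = dist w x + dist z x := by rw [dist_comm x w]; ring
  have tri5 : e ≤ g + c := by
    rw [hedef, hgdef, hcdef]
    calc dist x w ≤ dist x z + dist z w := dist_triangle x z w
      _ = dist z w + dist x z := by ring
  have tri6 : c ≤ e + g := by
    rw [hedef, hgdef, hcdef, dist_comm z w]; exact dist_triangle x w z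
  -- planar coordinates
  obtain ⟨y1, hy1def⟩ : ∃ v : ℝ, v = (a^2 + c^2 - b^2)/(2*c) := ⟨_, rfl⟩
  obtain ⟨w1, hw1def⟩ : ∃ v : ℝ, v = (e^2 + c^2 - g^2)/(2*c) := ⟨_, rfl⟩
  have hy1a : y1^2 ≤ a^2 := by
    rw [hy1def, div_pow, div_le_iff₀ (by positivity : (0:ℝ) < (2*c)^2)]
    nlinarith [mul_nonneg (by linarith : (0:ℝ) ≤ a + c - b) (by linarith : (0:ℝ) ≤ a + c + b),
      mul_nonneg (by linarith : (0:ℝ) ≤ b + c - a) (by linarith : (0:ℝ) ≤ a + b - c)]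
  have hw1e : w1^2 ≤ e^2 := by
    rw [hw1def, div_pow, div_le_iff₀ (by positivity : (0:ℝ) < (2*c)^2)]
    nlinarith [mul_nonneg (by linarith : (0:ℝ) ≤ e + c - g) (by linarith : (0:ℝ) ≤ e + c + g),
      mul_nonneg (by linarith : (0:ℝ) ≤ g + c - e) (by linarith : (0:ℝ) ≤ e + g - c)]
  obtain ⟨y2, hy2def⟩ : ∃ v : ℝ, v = Real.sqrt (a^2 - y1^2) := ⟨_, rfl⟩
  obtain ⟨w2, hw2def⟩ : ∃ v : ℝ, v = -Real.sqrt (e^2 - w1^2) := ⟨_, rfl⟩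
  have hy2 : 0 ≤ y2 := by rw [hy2def]; exact Real.sqrt_nonneg _
  have hw2 : w2 ≤ 0 := by rw [hw2def]; exact neg_nonpos.mpr (Real.sqrt_nonneg _)
  have hy2sq : y2^2 = a^2 - y1^2 := by rw [hy2def]; exact Real.sq_sqrt (by linarith)
  have hw2sq : w2^2 = e^2 - w1^2 := by
    rw [hw2def, neg_pow]; simp [Real.sq_sqrt (by linarith : (0:ℝ) ≤ e^2 - w1^2)]
  have ha2 : y1^2 + y2^2 = a^2 := by rw [hy2sq]; ring
  have hb2 : (y1 - c)^2 + y2^2 = b^2 := by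
    rw [hy2sq, hy1def]; field_simp; ring
  have he2 : w1^2 + w2^2 = e^2 := by rw [hw2sq]; ring
  have hg2 : (w1 - c)^2 + w2^2 = g^2 := by
    rw [hw2sq, hw1def]; field_simp; ring
  -- the planar configuration
  set X' : EuclideanSpace ℝ (Fin 3) := (WithLp.equiv 2 (Fin 3 → ℝ)).symm ![0,0,0] with hX'
  set Y' : EuclideanSpace ℝ (Fin 3) := (WithLp.equiv 2 (Fin 3 → ℝ)).symm ![y1,y2,0] with hY'
  set Z' : EuclideanSpace ℝ (Fin 3) := (WithLp.equiv 2 (Fin 3 → ℝ)).symm ![c,0,0] with hZ'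
  set W' : EuclideanSpace ℝ (Fin 3) := (WithLp.equiv 2 (Fin 3 → ℝ)).symm ![w1,w2,0] with hW'
  have dXY : dist X' Y' = a := aux_dist_pts 0 0 y1 y2 a ha.le (by linear_combination ha2)
  have dYZ : dist Y' Z' = b := aux_dist_pts y1 y2 c 0 b hb.le (by linear_combination hb2)
  have dZX : dist Z' X' = c := aux_dist_pts c 0 0 0 c hc.le (by ring)
  have dXW : dist X' W' = e := aux_dist_pts 0 0 w1 w2 e he.le (by linear_combination he2)
  have dWZ : dist W' Z' = g := aux_dist_pts w1 w2 c 0 g hg.le (by linear_combination hg2)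
  have dYW : dist Y' W' = Real.sqrt ((y1 - w1)^2 + (y2 - w2)^2) := by
    rw [hY', hW', EuclideanSpace.dist_eq]
    simp only [WithLp.equiv_symm_apply, WithLp.ofLp_toLp, Fin.sum_univ_three, Matrix.cons_val_zero,
      Matrix.cons_val_one, Matrix.head_cons, Matrix.cons_val_two, Matrix.tail_cons,
      Real.dist_eq, sq_abs]
    rw [show (y1 - w1)^2 + (y2 - w2)^2 + (0 - 0)^2 = (y1 - w1)^2 + (y2 - w2)^2 by ring]
  have hodd : dist Y' W' < f := by
    rw [hfdef]
    exact hod X' Y' Z' W' (dXY.trans hadef) (dYZ.trans hbdef) (dZX.trans (hcdef.trans (dist_comm x z)))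
      (dXW.trans hedef) (dWZ.trans (hgdef.trans (dist_comm z w)))
  have hD : (y1 - w1)^2 + (y2 - w2)^2 < f^2 := by
    rw [dYW] at hodd
    exact (Real.sqrt_lt' hf).mp hodd
  -- translate the angle assumptions into algebraic form
  have hu1b := aux_cos_bound a b c ha hc tri1 tri2 tri3
  have hu2b := aux_cos_bound c g e hc he (by linarith) (by linarith) (by linarith)
  have hu3b := aux_cos_bound b a c hb hc (by linarith) (by linarith) (by linarith)
  have hu4b := aux_cos_bound c e g hc hg (by linarith) (by linarith) (by linarith)
  have hca1 : compAngle y x z = Real.arccos ((a^2 + c^2 - b^2)/(2*a*c)) := by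
    unfold compAngle
    rw [← hadef, ← hcdef, ← hbdef]
  have hca2 : compAngle z x w = Real.arccos ((c^2 + e^2 - g^2)/(2*c*e)) := by
    unfold compAngle
    rw [← hcdef, ← hedef, ← hgdef]
  have hca3 : compAngle y z x = Real.arccos ((b^2 + c^2 - a^2)/(2*b*c)) := by
    unfold compAngle
    rw [dist_comm z y, dist_comm z x, dist_comm y x, ← hbdef, ← hcdef, ← hadef]
  have hca4 : compAngle x z w = Real.arccos ((c^2 + g^2 - e^2)/(2*c*g)) := by
    unfold compAngle
    rw [dist_comm z x, ← hcdef, ← hgdef, ← hedef]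
  have hA0 : 0 ≤ (a^2 + c^2 - b^2)/(2*a*c) + (c^2 + e^2 - g^2)/(2*c*e) := by
    apply aux_arccos_add _ _ hu1b.1 hu1b.2 hu2b.1 hu2b.2
    rw [← hca1, ← hca2]; exact hsum1
  have hB0 : 0 ≤ (b^2 + c^2 - a^2)/(2*b*c) + (c^2 + g^2 - e^2)/(2*c*g) := by
    apply aux_arccos_add _ _ hu3b.1 hu3b.2 hu4b.1 hu4b.2
    rw [← hca3, ← hca4]; exact hsum2
  have hA : 0 ≤ e*y1 + a*w1 := by
    have h := mul_nonneg hA0 (by positivity : (0:ℝ) ≤ a*e)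
    rw [hy1def, hw1def]
    have heq : ((a^2 + c^2 - b^2)/(2*a*c) + (c^2 + e^2 - g^2)/(2*c*e)) * (a*e)
        = e*((a^2 + c^2 - b^2)/(2*c)) + a*((e^2 + c^2 - g^2)/(2*c)) := by
      field_simp; ring
    linarith [heq ▸ h]
  have hB : 0 ≤ g*(c - y1) + b*(c - w1) := by
    have h := mul_nonneg hB0 (by positivity : (0:ℝ) ≤ b*g)
    rw [hy1def, hw1def]
    have heq : ((b^2 + c^2 - a^2)/(2*b*c) + (c^2 + g^2 - e^2)/(2*c*g)) * (b*g)
        = g*(c - (a^2 + c^2 - b^2)/(2*c)) + b*(c - (e^2 + c^2 - g^2)/(2*c)) := by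
      field_simp; ring
    linarith [heq ▸ h]
  -- the cross-product inequalities
  have hA' : 0 ≤ w1*y2 - y1*w2 := by
    have := aux_cross_nonneg a e y1 y2 w1 (-w2) ha he hy2 (by linarith)
      ha2 (by rw [← he2]; ring) hA
    linarith
  have hB' : 0 ≤ (c - w1)*y2 - (c - y1)*w2 := by
    have := aux_cross_nonneg b g (c - y1) y2 (c - w1) (-w2) hb hg hy2 (by linarith)
      (by rw [← hb2]; ring) (by rw [← hg2]; ring) hB
    linarith
  have hmax : 0 ≤ y1 ∨ 0 ≤ w1 := aux_or_nonneg a e y1 w1 ha he hA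
  have hmin : y1 ≤ c ∨ w1 ≤ c := by
    rcases aux_or_nonneg b g (c - y1) (c - w1) hb hg (by linarith) with h | h
    · exact Or.inl (by linarith)
    · exact Or.inr (by linarith)
  -- apply the picking lemma
  obtain ⟨s, t, hsI, htI, hlt⟩ := aux_pick_st y1 y2 w1 w2 c
    (f^2 - ((y1 - w1)^2 + (y2 - w2)^2)) hc (by linarith) hy2 hw2
    (by rw [ha2]; positivity) (by rw [hb2]; positivity)
    (by rw [he2]; positivity) (by rw [hg2]; positivity)
    hA' hB' hmax hmin
  have h0 := hX t htI s ⟨hsI.1.le, hsI.2.le⟩ x y z w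
  rw [dist_comm w x] at h0
  rw [← hadef, ← hbdef, ← hcdef, ← hedef, ← hgdef, ← hfdef] at h0
  -- substitute the planar relations and derive the contradiction
  rw [← ha2, ← hb2, ← he2, ← hg2] at h0
  have hid : (1-t)*(1-s)*(y1^2+y2^2) + t*(1-s)*((y1-c)^2+y2^2) + t*s*((w1-c)^2+w2^2)
      + (1-t)*s*(w1^2+w2^2) - t*(1-t)*c^2 - s*(1-s)*f^2
      = ((1-s)*y1 + s*w1 - t*c)^2 + ((1-s)*y2 + s*w2)^2
        + s*(1-s)*(((y1-w1)^2 + (y2-w2)^2) - f^2) := by ring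
  linarith only [h0, hlt, hid]

end
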